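/- Every well-sorted term is good and every well-sorted abstraction is good: if wls s X then good X, and if wlsAbs (xs,s) A then goodAbs A. -/
import Mathlib


open scoped Classical

universe u

section Binding

variable (var varsort index bindex opsym : Type u)

/-! ### Inputs -/

/-- An `(α,β)`-input: a partial function from `α` to `β`. -/
abbrev Input (α β : Type u) : Type u := α → Option β

/-- The domain of an input. -/
def idom {α β : Type u} (inp : Input α β) : Set α := {a | inp a ≠ none}

/-- The componentwise lifting of a predicate to inputs. -/
def liftP {α β : Type u} (P : β → Prop) (inp : Input α β) : Prop :=
  ∀ a b, inp a = some b → P b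

/-- The componentwise lifting of a function to inputs. -/
def liftF {α β γ : Type u} (f : β → γ) (inp : Input α β) : Input α γ :=
  fun a => (inp a).map f

/-- An input is small if its domain has cardinality smaller than that of `var`. -/
def smallDom {α β : Type u} (inp : Input α β) : Prop :=
  Cardinal.mk (idom inp) < Cardinal.mk var

/-! ### Quasiterms -/

mutual
/-- Quasiterms: raw terms before quotienting by alpha-equivalence. -/
inductive QTerm : Type u where
  | qVar : varsort → var → QTerm
  | qOp : opsym → (index → Option QTerm) → (bindex → Option QAbs) → QTerm
/-- Quasiabstractions. -/
inductive QAbs : Type u where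
  | qAbs : varsort → var → QTerm → QAbs
end

/-- Transposition of two variables. -/
noncomputable def swapVar (z1 z2 x : var) : var :=
  if x = z1 then z2 else if x = z2 then z1 else x

/-- Sort-aware transposition of variables (acts only on variables of varsort `zs`). -/
noncomputable def swapVarS (zs xs : varsort) (z1 z2 x : var) : var :=
  if xs = zs then swapVar var z1 z2 x else x

variable {var varsort index bindex opsym}

/-- Swapping of the variables `z1`, `z2` at varsort `zs` in a quasiterm
(transposing them everywhere, including binding positions). -/
noncomputable def qSwap (z1 z2 : var) (zs : varsort) :
    QTerm var varsort index bindex opsym → QTerm var varsort index bindex opsym :=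
  QTerm.rec (motive_1 := fun _ => QTerm var varsort index bindex opsym)
    (motive_2 := fun _ => QAbs var varsort index bindex opsym)
    (motive_3 := fun _ => Option (QTerm var varsort index bindex opsym))
    (motive_4 := fun _ => Option (QAbs var varsort index bindex opsym))
    (fun xs x => .qVar xs (swapVarS var varsort zs xs z1 z2 x))
    (fun d _ _ rinp rbinp => .qOp d rinp rbinp)
    (fun xs x _ rX => .qAbs xs (swapVarS var varsort zs xs z1 z2 x) rX)
    none (fun _ r => some r) none (fun _ r => some r)

/-- Swapping of variables in a quasiabstraction. -/
noncomputable def qSwapAbs (z1 z2 : var) (zs : varsort) :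
    QAbs var varsort index bindex opsym → QAbs var varsort index bindex opsym
  | .qAbs xs x X => .qAbs xs (swapVarS var varsort zs xs z1 z2 x) (qSwap z1 z2 zs X)

/-! ### Freshness and goodness -/

mutual
/-- `QFresh ys y X`: the variable `y` of varsort `ys` has no free occurrence in `X`. -/
inductive QFresh : varsort → var → QTerm var varsort index bindex opsym → Prop where
  | qVar : ∀ {ys y xs x}, (ys, y) ≠ (xs, x) → QFresh ys y (.qVar xs x)
  | qOp : ∀ {ys y d inp binp}, (∀ i X, inp i = some X → QFresh ys y X) →
      (∀ j A, binp j = some A → QFreshAbs ys y A) → QFresh ys y (.qOp d inp binp)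
/-- Freshness for quasiabstractions. -/
inductive QFreshAbs : varsort → var → QAbs var varsort index bindex opsym → Prop where
  | qAbs_bound : ∀ {xs x X}, QFreshAbs xs x (.qAbs xs x X)
  | qAbs_body : ∀ {ys y xs x X}, QFresh ys y X → QFreshAbs ys y (.qAbs xs x X)
end

mutual
/-- Good quasiterms: all constructors branch less than `|var|`. -/
inductive QGood : QTerm var varsort index bindex opsym → Prop where
  | qVar : ∀ {xs x}, QGood (.qVar xs x)
  | qOp : ∀ {d inp binp}, (∀ i X, inp i = some X → QGood X) →
      (∀ j A, binp j = some A → QGoodAbs A) →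
      smallDom var inp → smallDom var binp → QGood (.qOp d inp binp)
/-- Good quasiabstractions. -/
inductive QGoodAbs : QAbs var varsort index bindex opsym → Prop where
  | qAbs : ∀ {xs x X}, QGood X → QGoodAbs (.qAbs xs x X)
end

/-! ### Alpha-equivalence -/

mutual
/-- Alpha-equivalence of quasiterms. -/
inductive Alpha : QTerm var varsort index bindex opsym →
    QTerm var varsort index bindex opsym → Prop where
  | qVar : ∀ {xs x}, Alpha (.qVar xs x) (.qVar xs x)
  | qOp : ∀ {d inp binp inp' binp'},
      (∀ i, inp i = none ↔ inp' i = none) →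
      (∀ i X X', inp i = some X → inp' i = some X' → Alpha X X') →
      (∀ j, binp j = none ↔ binp' j = none) →
      (∀ j A A', binp j = some A → binp' j = some A' → AlphaAbs A A') →
      Alpha (.qOp d inp binp) (.qOp d inp' binp')
/-- Alpha-equivalence of quasiabstractions (the exists-fresh formulation). -/
inductive AlphaAbs : QAbs var varsort index bindex opsym →
    QAbs var varsort index bindex opsym → Prop where
  | qAbs : ∀ {xs x x' X X' y}, y ∉ ({x, x'} : Set var) →
      QFresh xs y X → QFresh xs y X' →
      Alpha (qSwap y x xs X) (qSwap y x' xs X') →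
      AlphaAbs (.qAbs xs x X) (.qAbs xs x' X')
end

/-! ### Terms and abstractions as quotients -/

variable (var varsort index bindex opsym)

/-- Terms: quasiterms modulo alpha-equivalence. -/
def Term : Type u := Quot (@Alpha var varsort index bindex opsym)

/-- Abstractions: quasiabstractions modulo alpha-equivalence. -/
def Abstr : Type u := Quot (@AlphaAbs var varsort index bindex opsym)

variable {var varsort index bindex opsym}

/-- The projection from quasiterms to terms. -/
def tmk : QTerm var varsort index bindex opsym → Term var varsort index bindex opsym :=
  Quot.mk _

/-- The projection from quasiabstractions to abstractions. -/
def amk : QAbs var varsort index bindex opsym → Abstr var varsort index bindex opsym :=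
  Quot.mk _

/-- A representative of a term. -/
noncomputable def trep (X : Term var varsort index bindex opsym) :
    QTerm var varsort index bindex opsym := Quot.out X

/-- A representative of an abstraction. -/
noncomputable def arep (A : Abstr var varsort index bindex opsym) :
    QAbs var varsort index bindex opsym := Quot.out A

/-- Good terms. -/
def good (X : Term var varsort index bindex opsym) : Prop := QGood (trep X)

/-- Good abstractions. -/
def goodAbs (A : Abstr var varsort index bindex opsym) : Prop := QGoodAbs (arep A)

/-- The variable-injection constructor on terms. -/
def Var (xs : varsort) (x : var) : Term var varsort index bindex opsym :=
  tmk (.qVar xs x)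

/-- The operation constructor on terms. -/
noncomputable def Op (d : opsym) (inp : Input index (Term var varsort index bindex opsym))
    (binp : Input bindex (Abstr var varsort index bindex opsym)) :
    Term var varsort index bindex opsym :=
  tmk (.qOp d (liftF trep inp) (liftF arep binp))

/-- The abstraction constructor. -/
noncomputable def Abs (xs : varsort) (x : var) (X : Term var varsort index bindex opsym) :
    Abstr var varsort index bindex opsym :=
  amk (.qAbs xs x (trep X))

/-- Freshness on terms. -/
def fresh (ys : varsort) (y : var) (X : Term var varsort index bindex opsym) : Prop :=
  QFresh ys y (trep X)

/-- Freshness on abstractions. -/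
def freshAbs (ys : varsort) (y : var) (A : Abstr var varsort index bindex opsym) : Prop :=
  QFreshAbs ys y (arep A)

/-- Swapping on terms. -/
noncomputable def tswap (X : Term var varsort index bindex opsym)
    (z1 z2 : var) (zs : varsort) : Term var varsort index bindex opsym :=
  tmk (qSwap z1 z2 zs (trep X))

/-! ### Substitution -/

mutual
/-- The graph of capture-avoiding substitution on quasiterms:
`QSubst X Y y ys Z` means that `Z` is a result of substituting `Y` for the free
occurrences of the variable `y` of varsort `ys` in `X` (along a capture-free
representative). -/
inductive QSubst : QTerm var varsort index bindex opsym →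
    QTerm var varsort index bindex opsym → var → varsort →
    QTerm var varsort index bindex opsym → Prop where
  | var_eq : ∀ {Y y ys}, QSubst (.qVar ys y) Y y ys Y
  | var_ne : ∀ {Y y ys xs x}, (xs, x) ≠ (ys, y) → QSubst (.qVar xs x) Y y ys (.qVar xs x)
  | op : ∀ {Y y ys d inp binp inp' binp'},
      (∀ i, inp i = none ↔ inp' i = none) →
      (∀ i X X', inp i = some X → inp' i = some X' → QSubst X Y y ys X') →
      (∀ j, binp j = none ↔ binp' j = none) →
      (∀ j A A', binp j = some A → binp' j = some A' → QSubstAbs A Y y ys A') →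
      QSubst (.qOp d inp binp) Y y ys (.qOp d inp' binp')
/-- The graph of capture-avoiding substitution on quasiabstractions. -/
inductive QSubstAbs : QAbs var varsort index bindex opsym →
    QTerm var varsort index bindex opsym → var → varsort →
    QAbs var varsort index bindex opsym → Prop where
  | abs : ∀ {Y y ys xs x X X'}, (xs, x) ≠ (ys, y) → QFresh xs x Y →
      QSubst X Y y ys X' → QSubstAbs (.qAbs xs x X) Y y ys (.qAbs xs x X')
end

/-- The graph of capture-avoiding substitution on terms. -/
def SubstRel (X Y : Term var varsort index bindex opsym) (y : var) (ys : varsort)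
    (Z : Term var varsort index bindex opsym) : Prop :=
  ∃ qX qZ, tmk qX = X ∧ tmk qZ = Z ∧ QSubst qX (trep Y) y ys qZ

/-- Capture-avoiding substitution on terms: `subst X Y y ys` is `X[Y/y]_ys`. -/
noncomputable def subst (X Y : Term var varsort index bindex opsym)
    (y : var) (ys : varsort) : Term var varsort index bindex opsym :=
  if h : ∃ Z, SubstRel X Y y ys Z then h.choose else X

/-- The graph of capture-avoiding substitution on abstractions. -/
def SubstAbsRel (A : Abstr var varsort index bindex opsym)
    (Y : Term var varsort index bindex opsym) (y : var) (ys : varsort)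
    (B : Abstr var varsort index bindex opsym) : Prop :=
  ∃ qA qB, amk qA = A ∧ amk qB = B ∧ QSubstAbs qA (trep Y) y ys qB

/-- Capture-avoiding substitution on abstractions: `substAbs A Y y ys` is `A[Y/y]_ys`. -/
noncomputable def substAbs (A : Abstr var varsort index bindex opsym)
    (Y : Term var varsort index bindex opsym) (y : var) (ys : varsort) :
    Abstr var varsort index bindex opsym :=
  if h : ∃ B, SubstAbsRel A Y y ys B then h.choose else A

/-! ### Parallel substitution -/

mutual
/-- The graph of capture-avoiding parallel substitution on quasiterms, along an
assignment `ρ : varsort → var → Option qterm`. -/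
inductive QPSubst : QTerm var varsort index bindex opsym →
    (varsort → var → Option (QTerm var varsort index bindex opsym)) →
    QTerm var varsort index bindex opsym → Prop where
  | var_some : ∀ {ρ xs x Y}, ρ xs x = some Y → QPSubst (.qVar xs x) ρ Y
  | var_none : ∀ {ρ xs x}, ρ xs x = none → QPSubst (.qVar xs x) ρ (.qVar xs x)
  | op : ∀ {ρ d inp binp inp' binp'},
      (∀ i, inp i = none ↔ inp' i = none) →
      (∀ i X X', inp i = some X → inp' i = some X' → QPSubst X ρ X') →
      (∀ j, binp j = none ↔ binp' j = none) →
      (∀ j A A', binp j = some A → binp' j = some A' → QPSubstAbs A ρ A') →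
      QPSubst (.qOp d inp binp) ρ (.qOp d inp' binp')
/-- The graph of capture-avoiding parallel substitution on quasiabstractions. -/
inductive QPSubstAbs : QAbs var varsort index bindex opsym →
    (varsort → var → Option (QTerm var varsort index bindex opsym)) →
    QAbs var varsort index bindex opsym → Prop where
  | abs : ∀ {ρ xs x X X'}, ρ xs x = none →
      (∀ ys y Y, ρ ys y = some Y → QFresh xs x Y) →
      QPSubst X ρ X' → QPSubstAbs (.qAbs xs x X) ρ (.qAbs xs x X')
end

/-- Turning a term-valued assignment into a quasiterm-valued one, by picking
representatives. -/
noncomputable def qassign (ρ : varsort → var → Option (Term var varsort index bindex opsym)) :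
    varsort → var → Option (QTerm var varsort index bindex opsym) :=
  fun xs x => (ρ xs x).map trep

/-- The graph of parallel substitution on terms. -/
def PSubstRel (X : Term var varsort index bindex opsym)
    (ρ : varsort → var → Option (Term var varsort index bindex opsym))
    (Z : Term var varsort index bindex opsym) : Prop :=
  ∃ qX qZ, tmk qX = X ∧ tmk qZ = Z ∧ QPSubst qX (qassign ρ) qZ

/-- Capture-avoiding parallel substitution on terms: `psubst X ρ` is `X[ρ]`. -/
noncomputable def psubst (X : Term var varsort index bindex opsym)
    (ρ : varsort → var → Option (Term var varsort index bindex opsym)) :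
    Term var varsort index bindex opsym :=
  if h : ∃ Z, PSubstRel X ρ Z then h.choose else X

/-- The graph of parallel substitution on abstractions. -/
def PSubstAbsRel (A : Abstr var varsort index bindex opsym)
    (ρ : varsort → var → Option (Term var varsort index bindex opsym))
    (B : Abstr var varsort index bindex opsym) : Prop :=
  ∃ qA qB, amk qA = A ∧ amk qB = B ∧ QPSubstAbs qA (qassign ρ) qB

/-- Capture-avoiding parallel substitution on abstractions. -/
noncomputable def psubstAbs (A : Abstr var varsort index bindex opsym)
    (ρ : varsort → var → Option (Term var varsort index bindex opsym)) :
    Abstr var varsort index bindex opsym :=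
  if h : ∃ B, PSubstAbsRel A ρ B then h.choose else A

variable (sort : Type u) (asSort : varsort → sort) (stOf : opsym → sort)
  (arOf : opsym → Input index sort) (barOf : opsym → Input bindex (varsort × sort))

mutual
/-- Well-sorted terms over a binding signature. -/
inductive Wls : sort → Term var varsort index bindex opsym → Prop where
  | var : ∀ {xs x}, Wls (asSort xs) (Var xs x)
  | op : ∀ {d inp binp},
      (∀ i, arOf d i = none ↔ inp i = none) →
      (∀ i s X, arOf d i = some s → inp i = some X → Wls s X) →
      (∀ j, barOf d j = none ↔ binp j = none) →
      (∀ j xs s A, barOf d j = some (xs, s) → binp j = some A → WlsAbs (xs, s) A) →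
      Wls (stOf d) (Op d inp binp)
/-- Well-sorted abstractions over a binding signature. -/
inductive WlsAbs : varsort × sort → Abstr var varsort index bindex opsym → Prop where
  | abs : ∀ {xs s x X}, (∃ d j, barOf d j = some (xs, s)) → Wls s X →
      WlsAbs (xs, s) (Abs xs x X)
end


/-! ### Auxiliary lemmas for goodness -/

theorem qSwap_qOp (z1 z2 : var) (zs : varsort) (d : opsym)
    (inp : index → Option (QTerm var varsort index bindex opsym))
    (binp : bindex → Option (QAbs var varsort index bindex opsym)) :
    qSwap z1 z2 zs (.qOp d inp binp) =
      .qOp d (fun i => (inp i).map (qSwap z1 z2 zs))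
        (fun j => (binp j).map (qSwapAbs z1 z2 zs)) := by
  show QTerm.qOp d _ _ = _
  congr 1
  · funext i; cases inp i <;> rfl
  · funext j
    cases binp j with
    | none => rfl
    | some A => cases A <;> rfl

theorem idom_map {α β γ : Type u} (f : β → γ) (inp : Input α β) :
    idom (fun a => (inp a).map f) = idom inp := by
  ext a; simp [idom]

theorem smallDom_map {α β γ : Type u} (f : β → γ) (inp : Input α β) :
    smallDom var (fun a => (inp a).map f) ↔ smallDom var inp := by
  unfold smallDom; rw [idom_map]

theorem smallDom_of_lt {α β : Type u} (h : Cardinal.mk α < Cardinal.mk var)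
    (inp : Input α β) : smallDom var inp :=
  lt_of_le_of_lt (Cardinal.mk_set_le _) h

theorem idom_eq_of_dom_iff {α β : Type u} {inp inp' : Input α β}
    (h : ∀ a, inp a = none ↔ inp' a = none) : idom inp = idom inp' :=
  Set.ext fun a => not_iff_not.mpr (h a)

theorem qgood_qSwap_t (X : QTerm var varsort index bindex opsym) :
    ∀ (z1 z2 : var) (zs : varsort), QGood (qSwap z1 z2 zs X) ↔ QGood X := by
  have pv : ∀ (xs : varsort) (x : var), ∀ (z1 z2 : var) (zs : varsort),
      QGood (qSwap (index := index) (bindex := bindex) (opsym := opsym)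
        z1 z2 zs (.qVar xs x)) ↔ QGood (QTerm.qVar xs x : QTerm var varsort index bindex opsym) := by
    intro xs x z1 z2 zs
    constructor <;> intro _ <;> exact QGood.qVar
  refine QTerm.rec
      (motive_1 := fun X => ∀ (z1 z2 : var) (zs : varsort),
        QGood (qSwap z1 z2 zs X) ↔ QGood X)
      (motive_2 := fun A => ∀ (z1 z2 : var) (zs : varsort),
        QGoodAbs (qSwapAbs z1 z2 zs A) ↔ QGoodAbs A)
      (motive_3 := fun oX => ∀ X, oX = some X → ∀ (z1 z2 : var) (zs : varsort),
        QGood (qSwap z1 z2 zs X) ↔ QGood X)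
      (motive_4 := fun oA => ∀ A, oA = some A → ∀ (z1 z2 : var) (zs : varsort),
        QGoodAbs (qSwapAbs z1 z2 zs A) ↔ QGoodAbs A)
      pv ?_ ?_ ?_ ?_ ?_ ?_ X
  · intro d inp binp ih1 ih2 z1 z2 zs
    rw [qSwap_qOp]
    constructor
    · intro h
      cases h with
      | qOp hg hga hs hsa =>
        refine QGood.qOp ?_ ?_ ((smallDom_map _ _).mp hs) ((smallDom_map _ _).mp hsa)
        · intro i X hX
          exact (ih1 i X hX z1 z2 zs).mp (hg i _ (by simp [hX]))
        · intro j A hA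
          exact (ih2 j A hA z1 z2 zs).mp (hga j _ (by simp [hA]))
    · intro h
      cases h with
      | qOp hg hga hs hsa =>
        refine QGood.qOp ?_ ?_ ((smallDom_map _ _).mpr hs) ((smallDom_map _ _).mpr hsa)
        · intro i X hX
          cases hi : inp i with
          | none => rw [hi] at hX; exact absurd hX (by simp)
          | some X0 =>
            rw [hi] at hX
            simp only [Option.map_some] at hX
            cases hX
            exact (ih1 i X0 hi z1 z2 zs).mpr (hg i X0 hi)
        · intro j A hA
          cases hj : binp j with
          | none => rw [hj] at hA; exact absurd hA (by simp)
          | some A0 =>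
            rw [hj] at hA
            simp only [Option.map_some] at hA
            cases hA
            exact (ih2 j A0 hj z1 z2 zs).mpr (hga j A0 hj)
  · intro xs x X ihX z1 z2 zs
    constructor
    · intro h
      cases h with
      | qAbs hX => exact QGoodAbs.qAbs ((ihX z1 z2 zs).mp hX)
    · intro h
      cases h with
      | qAbs hX => exact QGoodAbs.qAbs ((ihX z1 z2 zs).mpr hX)
  · intro X h; exact absurd h (by simp)
  · intro X ih X' h; cases h; exact ih
  · intro A h; exact absurd h (by simp)
  · intro A ih A' h; cases h; exact ih

theorem qgood_qSwap_a (A : QAbs var varsort index bindex opsym)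
    (z1 z2 : var) (zs : varsort) :
    QGoodAbs (qSwapAbs z1 z2 zs A) ↔ QGoodAbs A := by
  cases A with
  | qAbs xs x X =>
    constructor
    · intro h
      cases h with
      | qAbs hX => exact QGoodAbs.qAbs ((qgood_qSwap_t X z1 z2 zs).mp hX)
    · intro h
      cases h with
      | qAbs hX => exact QGoodAbs.qAbs ((qgood_qSwap_t X z1 z2 zs).mpr hX)


theorem smallDom_iff_of_dom_iff {α β : Type u} {inp inp' : Input α β}
    (h : ∀ a, inp a = none ↔ inp' a = none) :
    smallDom var inp ↔ smallDom var inp' := by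
  unfold smallDom; rw [idom_eq_of_dom_iff h]

theorem alpha_qgood_t {X X' : QTerm var varsort index bindex opsym}
    (h : Alpha X X') : QGood X ↔ QGood X' := by
  refine Alpha.rec (motive_1 := fun X X' _ => QGood X ↔ QGood X')
    (motive_2 := fun A A' _ => QGoodAbs A ↔ QGoodAbs A') ?_ ?_ ?_ h
  · intro xs x; exact Iff.rfl
  · intro d inp binp inp' binp' hdom _ hbdom _ ih ihb
    constructor
    · intro hg
      cases hg with
      | qOp hg hga hs hsa =>
        refine QGood.qOp ?_ ?_ ((smallDom_iff_of_dom_iff hdom).mp hs)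
          ((smallDom_iff_of_dom_iff hbdom).mp hsa)
        · intro i X' hX'
          cases hi : inp i with
          | none => simp [(hdom i).mp hi] at hX'
          | some X0 => exact (ih i X0 X' hi hX').mp (hg i X0 hi)
        · intro j A' hA'
          cases hj : binp j with
          | none => simp [(hbdom j).mp hj] at hA'
          | some A0 => exact (ihb j A0 A' hj hA').mp (hga j A0 hj)
    · intro hg
      cases hg with
      | qOp hg hga hs hsa =>
        refine QGood.qOp ?_ ?_ ((smallDom_iff_of_dom_iff hdom).mpr hs)
          ((smallDom_iff_of_dom_iff hbdom).mpr hsa)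
        · intro i X hX
          cases hi : inp' i with
          | none => simp [(hdom i).mpr hi] at hX
          | some X1 => exact (ih i X X1 hX hi).mpr (hg i X1 hi)
        · intro j A hA
          cases hj : binp' j with
          | none => simp [(hbdom j).mpr hj] at hA
          | some A1 => exact (ihb j A A1 hA hj).mpr (hga j A1 hj)
  · intro xs x x' X X' y hy hf hf' halpha ih
    constructor
    · intro h
      cases h with
      | qAbs hX =>
        exact QGoodAbs.qAbs
          ((qgood_qSwap_t X' y x' xs).mp (ih.mp ((qgood_qSwap_t X y x xs).mpr hX)))
    · intro h
      cases h with
      | qAbs hX =>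
        exact QGoodAbs.qAbs
          ((qgood_qSwap_t X y x xs).mp (ih.mpr ((qgood_qSwap_t X' y x' xs).mpr hX)))

theorem alpha_qgood_a {A A' : QAbs var varsort index bindex opsym}
    (h : AlphaAbs A A') : QGoodAbs A ↔ QGoodAbs A' := by
  cases h with
  | qAbs hy hf hf' halpha =>
    rename_i xs x x' X X' y
    constructor
    · intro h
      cases h with
      | qAbs hX =>
        exact QGoodAbs.qAbs ((qgood_qSwap_t X' y x' xs).mp
          ((alpha_qgood_t halpha).mp ((qgood_qSwap_t X y x xs).mpr hX)))
    · intro h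
      cases h with
      | qAbs hX =>
        exact QGoodAbs.qAbs ((qgood_qSwap_t X y x xs).mp
          ((alpha_qgood_t halpha).mpr ((qgood_qSwap_t X' y x' xs).mpr hX)))

theorem eqvgen_qgood_t {X X' : QTerm var varsort index bindex opsym}
    (h : Relation.EqvGen Alpha X X') : QGood X ↔ QGood X' := by
  induction h with
  | rel _ _ h => exact alpha_qgood_t h
  | refl => exact Iff.rfl
  | symm _ _ _ ih => exact ih.symm
  | trans _ _ _ _ _ ih1 ih2 => exact ih1.trans ih2

theorem eqvgen_qgood_a {A A' : QAbs var varsort index bindex opsym}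
    (h : Relation.EqvGen AlphaAbs A A') : QGoodAbs A ↔ QGoodAbs A' := by
  induction h with
  | rel _ _ h => exact alpha_qgood_a h
  | refl => exact Iff.rfl
  | symm _ _ _ ih => exact ih.symm
  | trans _ _ _ _ _ ih1 ih2 => exact ih1.trans ih2

theorem good_tmk (q : QTerm var varsort index bindex opsym) :
    good (tmk q) ↔ QGood q :=
  eqvgen_qgood_t (Quot.eqvGen_exact (Quot.out_eq (tmk q)))

theorem goodAbs_amk (q : QAbs var varsort index bindex opsym) :
    goodAbs (amk q) ↔ QGoodAbs q :=
  eqvgen_qgood_a (Quot.eqvGen_exact (Quot.out_eq (amk q)))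


/-- every well-sorted term is good and every well-sorted
abstraction is good. -/
theorem wls_good (hinf : Cardinal.aleph0 ≤ Cardinal.mk var)
    (hreg : (Cardinal.mk var).IsRegular)
    (hinj : Function.Injective asSort)
    (hsort : Cardinal.mk sort < Cardinal.mk var)
    (hindex : Cardinal.mk index < Cardinal.mk var)
    (hbindex : Cardinal.mk bindex < Cardinal.mk var) :
    (∀ (s : sort) (X : Term var varsort index bindex opsym),
      Wls sort asSort stOf arOf barOf s X → good X) ∧
    (∀ (xs : varsort) (s : sort) (A : Abstr var varsort index bindex opsym),
      WlsAbs sort asSort stOf arOf barOf (xs, s) A → goodAbs A) := by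
  constructor
  · intro s X h
    refine Wls.rec (motive_1 := fun s X _ => good X)
      (motive_2 := fun p A _ => goodAbs A) ?_ ?_ ?_ h
    · intro xs x
      exact (good_tmk _).mpr QGood.qVar
    · intro d inp binp hdom _ hbdom _ ih ihb
      refine (good_tmk _).mpr (QGood.qOp ?_ ?_ (smallDom_of_lt hindex _)
        (smallDom_of_lt hbindex _))
      · intro i X' hX'
        cases hi : inp i with
        | none => simp [liftF, hi] at hX'
        | some X0 =>
          simp only [liftF, hi, Option.map_some] at hX'
          cases hX'
          cases ha : arOf d i with
          | none => simp [(hdom i).mp ha] at hi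
          | some s0 => exact ih i s0 X0 ha hi
      · intro j A' hA'
        cases hj : binp j with
        | none => simp [liftF, hj] at hA'
        | some A0 =>
          simp only [liftF, hj, Option.map_some] at hA'
          cases hA'
          cases hb : barOf d j with
          | none => simp [(hbdom j).mp hb] at hj
          | some p =>
            obtain ⟨xs0, s0⟩ := p
            exact ihb j xs0 s0 A0 hb hj
    · intro xs s x X hex hwls ihX
      exact (goodAbs_amk _).mpr (QGoodAbs.qAbs ihX)
  · intro xs s A h
    refine WlsAbs.rec (motive_1 := fun s X _ => good X)
      (motive_2 := fun p A _ => goodAbs A) ?_ ?_ ?_ h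
    · intro xs x
      exact (good_tmk _).mpr QGood.qVar
    · intro d inp binp hdom _ hbdom _ ih ihb
      refine (good_tmk _).mpr (QGood.qOp ?_ ?_ (smallDom_of_lt hindex _)
        (smallDom_of_lt hbindex _))
      · intro i X' hX'
        cases hi : inp i with
        | none => simp [liftF, hi] at hX'
        | some X0 =>
          simp only [liftF, hi, Option.map_some] at hX'
          cases hX'
          cases ha : arOf d i with
          | none => simp [(hdom i).mp ha] at hi
          | some s0 => exact ih i s0 X0 ha hi
      · intro j A' hA'
        cases hj : binp j with
        | none => simp [liftF, hj] at hA'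
        | some A0 =>
          simp only [liftF, hj, Option.map_some] at hA'
          cases hA'
          cases hb : barOf d j with
          | none => simp [(hbdom j).mp hb] at hj
          | some p =>
            obtain ⟨xs0, s0⟩ := p
            exact ihb j xs0 s0 A0 hb hj
    · intro xs s x X hex hwls ihX
      exact (goodAbs_amk _).mpr (QGoodAbs.qAbs ihX)


end Binding
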